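/- Let A[1..i] and B[1..m] be sequences with A[i] = B[j] and r ≥ 2. With Q' defined as the minimum possible largest element over δ-almost increasing common subsequences of a given length ending at a given position of B (∞ if none exist), the following holds: Q'(i, j, r) = min over all k with 1 ≤ k < j such that a length-(r−1) subsequence ending at k exists and A[i] + δ > Q'(i−1, k, r−1), of max(A[i], Q'(i−1, k, r−1)). -/

import Mathlib

open List

def DeltaAlmostIncreasing (δ : ℝ) (l : List ℝ) : Prop :=
  l.Pairwise fun a b => b + δ > a

def ExistsDAICSEndingAt (δ : ℝ) (X B : List ℝ) (j r : ℕ) : Prop :=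
  ∃ S₀ : List ℝ, (S₀ ++ [B[j-1]!]).length = r ∧
    DeltaAlmostIncreasing δ (S₀ ++ [B[j-1]!]) ∧
    (S₀ ++ [B[j-1]!]) <+ X ∧ S₀ <+ B.take (j-1)

/-- Q'(i,k,r) as in Lemma 1; ⊤ (∞) if no such subsequence exists. -/
noncomputable def Qp (δ : ℝ) (A B : List ℝ) (i k r : ℕ) : EReal :=
  sInf {w : EReal | ∃ S₀ : List ℝ, (S₀ ++ [B[k-1]!]).length = r ∧
    DeltaAlmostIncreasing δ (S₀ ++ [B[k-1]!]) ∧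
    (S₀ ++ [B[k-1]!]) <+ A.take i ∧ S₀ <+ B.take (k-1) ∧
    ∀ x ∈ S₀ ++ [B[k-1]!], (x : EReal) ≤ w}

lemma exists_max_mem {l : List ℝ} (h : l ≠ []) : ∃ m ∈ l, ∀ x ∈ l, x ≤ m := by
  induction l with
  | nil => exact absurd rfl h
  | cons a t ih =>
    rcases eq_or_ne t [] with rfl | ht
    · exact ⟨a, mem_cons_self, by intro x hx; simp at hx; simp [hx]⟩
    · obtain ⟨m, hm, hmax⟩ := ih ht
      rcases le_total a m with h1 | h1
      · refine ⟨m, mem_cons_of_mem _ hm, ?_⟩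
        intro x hx
        rcases mem_cons.1 hx with rfl | hx
        · exact h1
        · exact hmax x hx
      · refine ⟨a, mem_cons_self, ?_⟩
        intro x hx
        rcases mem_cons.1 hx with rfl | hx
        · exact le_rfl
        · exact (hmax x hx).trans h1

lemma snoc_sublist_decomp {α : Type*} {T : List α} {x : α} {L : List α} (h : T ++ [x] <+ L) :
    ∃ n, ∃ hn : n < L.length, L[n] = x ∧ T <+ L.take n := by
  obtain ⟨r₁, r₂, rfl, h1, h2⟩ := List.append_sublist_iff.1 h
  have hx : x ∈ r₂ := h2.subset (mem_singleton_self x)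
  obtain ⟨u, v, rfl⟩ := List.append_of_mem hx
  refine ⟨(r₁ ++ u).length, ?_, ?_, ?_⟩
  · simp
  · have h3 : (r₁ ++ (u ++ x :: v)) = (r₁ ++ u) ++ (x :: v) := by
      rw [List.append_assoc]
    rw [List.getElem_of_eq h3, List.getElem_append_right (le_refl _)]
    simp
  · rw [← List.append_assoc, List.take_append_of_le_length (le_refl _), List.take_length]
    exact h1.trans (sublist_append_left _ _)

lemma sublist_of_snoc_sublist_snoc {α : Type*} {T : List α} {x y : α} {L : List α}
    (h : T ++ [x] <+ L ++ [y]) : T <+ L := by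
  obtain ⟨n, hn, hget, hT⟩ := snoc_sublist_decomp h
  have hn' : n ≤ L.length := by simp at hn; omega
  rw [List.take_append_of_le_length hn'] at hT
  exact hT.trans (take_sublist _ _)

lemma take_eq_take_concat (A : List ℝ) (i : ℕ) (h1 : 1 ≤ i) (h2 : i ≤ A.length) :
    A.take i = A.take (i-1) ++ [A[i-1]!] := by
  have h3 : i - 1 < A.length := by omega
  rw [getElem!_pos A (i-1) h3]
  have h4 := List.take_concat_get h3
  rw [concat_eq_append] at h4
  conv_lhs => rw [show i = i - 1 + 1 from by omega]
  exact h4.symm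

/-- Lemma 1, matching case, value recurrence: if A[i] = B[j] and r ≥ 2,
Q'(i,j,r) = min over 1 ≤ k < j with a length-(r−1) subsequence ending at k existing and
A[i] + δ > Q'(i−1,k,r−1), of max(A[i], Q'(i−1,k,r−1)). -/
theorem stmt_12 (δ : ℝ) (hδ : 0 < δ) (A B : List ℝ) (i j r : ℕ)
    (hi1 : 1 ≤ i) (hiA : i ≤ A.length) (hj1 : 1 ≤ j) (hjB : j ≤ B.length)
    (heq : A[i-1]! = B[j-1]!) (hr : 2 ≤ r) :
    Qp δ A B i j r =
    sInf {w : EReal | ∃ k, 1 ≤ k ∧ k < j ∧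
      ExistsDAICSEndingAt δ (A.take (i-1)) B k (r-1) ∧
      ((A[i-1]! : EReal) + (δ : EReal) > Qp δ A B (i-1) k (r-1)) ∧
      w = max ((A[i-1]! : ℝ) : EReal) (Qp δ A B (i-1) k (r-1))} := by
  set a : ℝ := A[i-1]! with ha
  have htakeA : A.take i = A.take (i-1) ++ [a] := take_eq_take_concat A i hi1 hiA
  apply _root_.le_antisymm
  · -- Qp ≤ sInf R
    apply le_sInf
    rintro w ⟨k, hk1, hkj, hex, hlt, rfl⟩
    set q := Qp δ A B (i-1) k (r-1) with hq
    apply le_of_forall_gt_imp_ge_of_dense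
    intro b hb
    have hqb : q < b := lt_of_le_of_lt (le_max_right _ _) hb
    have hab : (a : EReal) < b := lt_of_le_of_lt (le_max_left _ _) hb
    have hqm : q < min b (((a + δ : ℝ) : EReal)) := by
      apply lt_min hqb
      rw [EReal.coe_add]
      exact hlt
    obtain ⟨w₀, hw₀, hw₀lt⟩ := sInf_lt_iff.1 hqm
    obtain ⟨S₀, hlen, hdai, hsubA, hsubB, hbound⟩ := hw₀
    have hw₀b : w₀ ≤ b := le_of_lt (lt_of_lt_of_le hw₀lt (min_le_left _ _))
    have hw₀a : w₀ < ((a + δ : ℝ) : EReal) := lt_of_lt_of_le hw₀lt (min_le_right _ _)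
    -- build member of the LHS set
    apply sInf_le
    refine ⟨S₀ ++ [B[k-1]!], ?_, ?_, ?_, ?_, ?_⟩
    · simp only [List.length_append, List.length_singleton] at hlen ⊢
      omega
    · unfold DeltaAlmostIncreasing
      rw [List.pairwise_append]
      refine ⟨hdai, List.pairwise_singleton _ _, ?_⟩
      intro x hx y hy
      rw [List.mem_singleton] at hy
      subst hy
      rw [← heq]
      have hxw : (x : EReal) ≤ w₀ := hbound x hx
      have : (x : EReal) < ((a + δ : ℝ) : EReal) := lt_of_le_of_lt hxw hw₀a
      exact_mod_cast this
    · rw [htakeA]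
      apply List.Sublist.append hsubA
      rw [← heq]
    · have hkB : k ≤ B.length := by omega
      have htakeB : B.take k = B.take (k-1) ++ [B[k-1]!] := take_eq_take_concat B k hk1 hkB
      have h1 : S₀ ++ [B[k-1]!] <+ B.take k := by
        rw [htakeB]; exact List.Sublist.append hsubB (List.Sublist.refl _)
      have h2 : B.take k <+ B.take (j-1) := by
        have : B.take k = (B.take (j-1)).take k := by
          rw [List.take_take]; congr 1; omega
        rw [this]; exact List.take_sublist _ _
      exact h1.trans h2
    · intro x hx
      rw [List.mem_append] at hx
      rcases hx with hx | hx
      · exact le_trans (hbound x hx) hw₀b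
      · rw [List.mem_singleton] at hx
        subst hx
        rw [← heq]
        exact le_of_lt hab
  · -- sInf R ≤ Qp
    apply le_sInf
    rintro w ⟨S₀, hlen, hdai, hsubA, hsubB, hbound⟩
    have hS₀len : S₀.length = r - 1 := by
      simp only [List.length_append, List.length_singleton] at hlen; omega
    have hne : S₀ ≠ [] := by
      intro h; rw [h] at hS₀len; simp at hS₀len; omega
    set T := S₀.dropLast with hT
    have hS : T ++ [S₀.getLast hne] = S₀ := List.dropLast_append_getLast hne
    obtain ⟨n, hn, hget, hTsub⟩ := snoc_sublist_decomp (hS ▸ hsubB)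
    have hnlen : n < j - 1 ∧ n < B.length := by
      rw [List.length_take] at hn; omega
    set k := n + 1 with hk
    have hkB : k - 1 < B.length := by omega
    have hbk : B[k-1]! = S₀.getLast hne := by
      rw [getElem!_pos B (k-1) hkB]
      have hkn : k - 1 = n := by omega
      simp only [hkn]
      rw [← hget, List.getElem_take]
    have hS' : T ++ [B[k-1]!] = S₀ := by rw [hbk]; exact hS
    have hTtake : T <+ B.take (k-1) := by
      have : (B.take (j-1)).take n = B.take n := by
        rw [List.take_take]; congr 1; omega
      rw [this] at hTsub
      rwa [show k - 1 = n by omega]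
    have hS₀A : S₀ <+ A.take (i-1) := by
      apply sublist_of_snoc_sublist_snoc (y := a)
      rw [← htakeA]
      exact hsubA
    have hdaiS₀ : DeltaAlmostIncreasing δ S₀ :=
      hdai.sublist (List.sublist_append_left _ _)
    have hlast : ∀ x ∈ S₀, B[j-1]! + δ > x := by
      have := (List.pairwise_append.1 hdai).2.2
      intro x hx
      exact this x hx (B[j-1]!) (List.mem_singleton_self _)
    -- q ≤ any bound for S₀'s elements
    set q := Qp δ A B (i-1) k (r-1) with hq
    have hqle : ∀ w' : EReal, (∀ x ∈ S₀, (x : EReal) ≤ w') → q ≤ w' := by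
      intro w' hw'
      apply sInf_le
      refine ⟨T, ?_, ?_, ?_, hTtake, ?_⟩
      · rw [hS']; exact hS₀len ▸ rfl
      · rw [hS']; exact hdaiS₀
      · rw [hS']; exact hS₀A
      · intro x hx; rw [hS'] at hx; exact hw' x hx
    obtain ⟨m, hm, hmax⟩ := exists_max_mem hne
    have hqm : q ≤ (m : EReal) := hqle _ (fun x hx => by exact_mod_cast hmax x hx)
    have hma : m < a + δ := by rw [heq]; exact hlast m hm
    have hlt : ((a : ℝ) : EReal) + (δ : EReal) > q := by
      apply lt_of_le_of_lt hqm
      rw [← EReal.coe_add]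
      exact_mod_cast hma
    have hqw : q ≤ w := hqle w (fun x hx => hbound x (List.mem_append_left _ hx))
    have haw : ((a : ℝ) : EReal) ≤ w := by
      have := hbound (B[j-1]!) (List.mem_append_right _ (List.mem_singleton_self _))
      rw [heq]; exact this
    have hmem : max ((a : ℝ) : EReal) q ∈
        {w : EReal | ∃ k, 1 ≤ k ∧ k < j ∧
          ExistsDAICSEndingAt δ (A.take (i-1)) B k (r-1) ∧
          ((A[i-1]! : EReal) + (δ : EReal) > Qp δ A B (i-1) k (r-1)) ∧
          w = max ((A[i-1]! : ℝ) : EReal) (Qp δ A B (i-1) k (r-1))} := by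
      refine ⟨k, by omega, by omega, ?_, hlt, rfl⟩
      refine ⟨T, ?_, ?_, ?_, hTtake⟩
      · rw [hS']; exact hS₀len ▸ rfl
      · rw [hS']; exact hdaiS₀
      · rw [hS']; exact hS₀A
    exact le_trans (sInf_le hmem) (max_le haw hqw)
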